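/- Monotonicity of the full-fill trajectory and total profit in the initial reputation: Fix an advertisement sequence A : {1,…,N} → {L,H}. If 0 ≤ R_1 ≤ R̂_1 ≤ 1, then the full-fill trajectories started at R_1 and R̂_1 satisfy R_i ≤ R̂_i, R'_i ≤ R̂'_i, and D(R'_i) ≤ D(R̂'_i) for every i = 1,…,N; consequently Π(A, R_1) ≤ Π(A, R̂_1). -/
import Mathlib


noncomputable section

/-- Post-advertisement reputation map. -/
def frep (α R a : ℝ) : ℝ := R + (1 - R) * a ^ α

/-- Demand function. -/
def dem (Λ q x : ℝ) : ℝ := if 0 < x then max 0 (Λ * (1 - q / x)) else 0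

/-- Full-fill reputation trajectory (0-indexed periods). -/
def rep (α w Λ q : ℝ) (A : ℕ → ℝ) (R1 : ℝ) : ℕ → ℝ
  | 0 => R1
  | i + 1 =>
      let R' := frep α (rep α w Λ q A R1 i) (A i)
      if 0 < dem Λ q R' then (1 - w) * R' + w else R'

/-- Full-fill total profit over horizon `N`. -/
def profit (α w Λ q p c cA : ℝ) (A : ℕ → ℝ) (R1 : ℝ) (N : ℕ) : ℝ :=
  ∑ i ∈ Finset.range N,
    ((p - c) * dem Λ q (frep α (rep α w Λ q A R1 i) (A i)) - cA * A i)

lemma dem_nonneg (Λ q x : ℝ) : 0 ≤ dem Λ q x := by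
  unfold dem; split
  · exact le_max_left _ _
  · exact le_refl 0

lemma dem_mono {Λ q : ℝ} (hΛ : 0 ≤ Λ) (hq : 0 ≤ q) {x y : ℝ} (hxy : x ≤ y) :
    dem Λ q x ≤ dem Λ q y := by
  unfold dem
  by_cases hx : 0 < x
  · have hy : 0 < y := lt_of_lt_of_le hx hxy
    rw [if_pos hx, if_pos hy]
    apply max_le_max le_rfl
    apply mul_le_mul_of_nonneg_left _ hΛ
    have : q / y ≤ q / x := div_le_div_of_nonneg_left hq hx hxy
    linarith
  · rw [if_neg hx]
    exact dem_nonneg Λ q y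

lemma frep_mono {α a : ℝ} (ha : a ^ α ≤ 1) {R R' : ℝ} (h : R ≤ R') :
    frep α R a ≤ frep α R' a := by
  unfold frep; nlinarith

lemma frep_mem {α R a : ℝ} (hR0 : 0 ≤ R) (hR1 : R ≤ 1) (ht0 : 0 ≤ a ^ α)
    (ht1 : a ^ α ≤ 1) : 0 ≤ frep α R a ∧ frep α R a ≤ 1 := by
  unfold frep; constructor <;> nlinarith

/-- Monotonicity of the full-fill trajectory and total profit in the initial
reputation. -/
theorem full_fill_monotone_in_initial_reputation
    (Λ c p cA m u α w L H q : ℝ) (N : ℕ)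
    (hΛ : 0 < Λ) (hc : 0 < c) (hcp : c < p) (hcA : 0 ≤ cA)
    (hm : 0 < m) (hu : 0 ≤ u) (hqdef : q = (u + p) / m) (hq1 : q < 1)
    (hα : 0 < α) (hw0 : 0 ≤ w) (hw1 : w ≤ 1)
    (hL0 : 0 ≤ L) (hLH : L < H) (hH1 : H ≤ 1)
    (A : ℕ → ℝ) (hA : ∀ i, A i = L ∨ A i = H)
    (R1 Rhat1 : ℝ) (hR10 : 0 ≤ R1) (hle : R1 ≤ Rhat1) (hRhat1 : Rhat1 ≤ 1) :
    (∀ i, i + 1 ≤ N →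
      rep α w Λ q A R1 i ≤ rep α w Λ q A Rhat1 i ∧
      frep α (rep α w Λ q A R1 i) (A i) ≤ frep α (rep α w Λ q A Rhat1 i) (A i) ∧
      dem Λ q (frep α (rep α w Λ q A R1 i) (A i)) ≤
        dem Λ q (frep α (rep α w Λ q A Rhat1 i) (A i))) ∧
    profit α w Λ q p c cA A R1 N ≤ profit α w Λ q p c cA A Rhat1 N := by
  have hp : 0 < p := hc.trans hcp
  have hq0 : 0 ≤ q := by
    rw [hqdef]; positivity
  have hA01 : ∀ i, 0 ≤ A i ∧ A i ≤ 1 := fun i => by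
    rcases hA i with h | h <;> rw [h] <;> constructor <;> linarith
  have ht : ∀ i, 0 ≤ (A i) ^ α ∧ (A i) ^ α ≤ 1 := fun i =>
    ⟨Real.rpow_nonneg (hA01 i).1 α,
     Real.rpow_le_one (hA01 i).1 (hA01 i).2 hα.le⟩
  -- trajectories stay in [0,1]
  have mem : ∀ (S : ℝ), 0 ≤ S → S ≤ 1 →
      ∀ i, 0 ≤ rep α w Λ q A S i ∧ rep α w Λ q A S i ≤ 1 := by
    intro S hS0 hS1 i
    induction i with
    | zero => exact ⟨hS0, hS1⟩
    | succ n ih =>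
      have hf := frep_mem ih.1 ih.2 (ht n).1 (ht n).2
      rw [rep]
      split
      · constructor <;> nlinarith [hf.1, hf.2]
      · exact hf
  -- pointwise monotonicity for all i
  have key : ∀ i, rep α w Λ q A R1 i ≤ rep α w Λ q A Rhat1 i := by
    intro i
    induction i with
    | zero => exact hle
    | succ n ih =>
      have hf : frep α (rep α w Λ q A R1 n) (A n) ≤
          frep α (rep α w Λ q A Rhat1 n) (A n) := frep_mono (ht n).2 ih
      have hd := dem_mono hΛ.le hq0 hf
      have hm2 := mem Rhat1 (hR10.trans hle) hRhat1 n
      have hf2 := frep_mem hm2.1 hm2.2 (ht n).1 (ht n).2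
      show rep α w Λ q A R1 (n+1) ≤ rep α w Λ q A Rhat1 (n+1)
      rw [rep, rep]
      split
      · rw [if_pos (lt_of_lt_of_le (by assumption) hd)]
        have := mul_le_mul_of_nonneg_left hf (by linarith : (0:ℝ) ≤ 1 - w)
        linarith
      · split
        · have := mul_nonneg hw0 (by linarith [hf2.2] : (0:ℝ) ≤ 1 - frep α (rep α w Λ q A Rhat1 n) (A n))
          nlinarith
        · exact hf
  have key' : ∀ i, frep α (rep α w Λ q A R1 i) (A i) ≤
      frep α (rep α w Λ q A Rhat1 i) (A i) := fun i => frep_mono (ht i).2 (key i)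
  refine ⟨fun i _ => ⟨key i, key' i, dem_mono hΛ.le hq0 (key' i)⟩, ?_⟩
  unfold profit
  apply Finset.sum_le_sum
  intro i _
  have := dem_mono hΛ.le hq0 (key' i)
  nlinarith
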